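/- Let l > 0 and T > 0. Let f : ℝ × [0,T] → ℝ be 2π-periodic in x and odd in x for each t (f(−x,t) = −f(x,t)), with f, ∂_x f, ∂_t f continuous, sup_{x,t} |f(x,t)| < l, such that for every (x,t) the principal-value limit Λf(x,t) := (1/(4π))·lim_{ε→0⁺} ∫_{ε<|η|<π} (f(x,t)−f(x−η,t))/sin²(η/2) dη exists with Λf continuous and bounded, and ∂_t f = (−1/(1+(∂_x f)²) + 1/(1+l²−f²))·Λf pointwise. Set M₀ := sup_x |f(x,0)|. Then for every t ∈ [0,T]: sup_x |f(x,t)| ≤ l·M₀ / (M₀ + (l − M₀)·e^{(C_l/2)·t}), where C_l := l²/(1+l²). In particular the amplitude decays exponentially, but the decay degenerates as M₀ → l. -/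

import Mathlib

open MeasureTheory Filter Set
open Topology

/-- The truncated principal-value integral for the periodic fractional Laplacian. -/
noncomputable def pvIntegralT (u : ℝ → ℝ) (x ε : ℝ) : ℝ :=
  (1 / (4 * Real.pi)) *
    ∫ η in {η : ℝ | ε < |η| ∧ |η| < Real.pi}, (u x - u (x - η)) / Real.sin (η / 2) ^ 2

/-- `Λu(x) = L` in the periodic principal-value sense. -/
def HasPVLambdaT (u : ℝ → ℝ) (x L : ℝ) : Prop :=
  Tendsto (fun ε => pvIntegralT u x ε) (nhdsWithin 0 (Set.Ioi 0)) (nhds L)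

lemma sin_half_sq_pos {η ε : ℝ} (hε : 0 < ε) (h1 : ε ≤ |η|) (h2 : |η| ≤ Real.pi) :
    0 < Real.sin (η / 2) ^ 2 := by
  have h3 : 0 < Real.sin (|η| / 2) := by
    apply Real.sin_pos_of_pos_of_lt_pi
    · linarith
    · nlinarith [Real.pi_pos]
  rcases abs_cases η with ⟨h, _⟩ | ⟨h, _⟩
  · rw [h] at h3; positivity
  · have : Real.sin (η / 2) = -Real.sin (|η| / 2) := by
      rw [h, ← Real.sin_neg]; ring_nf
    rw [this, neg_pow]
    simpa using pow_pos h3 2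

lemma pv_lower_bound (u : ℝ → ℝ) (hu : Continuous u)
    (hint : (∫ y in (-Real.pi)..Real.pi, u y) = 0)
    (hperu : Function.Periodic u (2 * Real.pi))
    (M x₀ L : ℝ) (hb : ∀ y, |u y| ≤ M) (hmax : u x₀ = M)
    (hpv : HasPVLambdaT u x₀ L) : M / 2 ≤ L := by
  have hπ := Real.pi_pos
  set F : ℝ → ℝ := fun η => (u x₀ - u (x₀ - η)) / Real.sin (η / 2) ^ 2 with hF
  -- fun_prop of F away from 0
  have hFcont : ∀ {ε : ℝ}, 0 < ε → ∀ a b : ℝ, ε ≤ |a| → ε ≤ |b| → |a| ≤ Real.pi → |b| ≤ Real.pi →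
      ContinuousOn F (Icc a b) → True := fun _ _ _ _ _ _ _ _ => trivial
  have hFc : ∀ {a b : ℝ}, (∀ η ∈ Icc a b, Real.sin (η/2)^2 ≠ 0) → ContinuousOn F (Icc a b) := by
    intro a b h
    apply ContinuousOn.div
    · exact (continuous_const.sub (hu.comp (continuous_const.sub continuous_id))).continuousOn
    · exact ((Real.continuous_sin.comp (continuous_id.div_const 2)).pow 2).continuousOn
    · exact h
  -- the key truncated estimate
  have key : ∀ ε ∈ Ioo (0:ℝ) Real.pi, M / 2 - M * ε / Real.pi ≤ pvIntegralT u x₀ ε := by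
    intro ε hε
    obtain ⟨hε0, hεπ⟩ := hε
    have hne1 : ∀ η ∈ Icc ε Real.pi, Real.sin (η/2)^2 ≠ 0 := by
      intro η hη
      have h1 : ε ≤ |η| := by rw [abs_of_pos (lt_of_lt_of_le hε0 hη.1)]; exact hη.1
      have h2 : |η| ≤ Real.pi := by rw [abs_of_pos (lt_of_lt_of_le hε0 hη.1)]; exact hη.2
      exact (sin_half_sq_pos hε0 h1 h2).ne'
    have hne2 : ∀ η ∈ Icc (-Real.pi) (-ε), Real.sin (η/2)^2 ≠ 0 := by
      intro η hη
      have hηneg : η < 0 := lt_of_le_of_lt hη.2 (by linarith)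
      have h1 : ε ≤ |η| := by rw [abs_of_neg hηneg]; linarith [hη.2]
      have h2 : |η| ≤ Real.pi := by rw [abs_of_neg hηneg]; linarith [hη.1]
      exact (sin_half_sq_pos hε0 h1 h2).ne'
    -- set decomposition
    have hset : {η : ℝ | ε < |η| ∧ |η| < Real.pi} = Ioo (-Real.pi) (-ε) ∪ Ioo ε Real.pi := by
      ext η
      simp only [mem_setOf_eq, mem_union, mem_Ioo]
      constructor
      · rintro ⟨h1, h2⟩
        rcases abs_cases η with ⟨h, _⟩ | ⟨h, _⟩
        · right; constructor <;> linarith [h1, h2]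
        · left; constructor <;> linarith [h1, h2]
      · rintro (⟨h1, h2⟩ | ⟨h1, h2⟩)
        · have : |η| = -η := abs_of_neg (by linarith)
          constructor <;> rw [this] <;> linarith
        · have : |η| = η := abs_of_pos (by linarith)
          constructor <;> rw [this] <;> linarith
    have hi1 : IntegrableOn F (Ioo ε Real.pi) := by
      exact ((hFc hne1).integrableOn_Icc).mono_set Ioo_subset_Icc_self
    have hi2 : IntegrableOn F (Ioo (-Real.pi) (-ε)) := by
      exact ((hFc hne2).integrableOn_Icc).mono_set Ioo_subset_Icc_self
    have hsplit : (∫ η in {η : ℝ | ε < |η| ∧ |η| < Real.pi}, F η)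
        = (∫ η in Ioo (-Real.pi) (-ε), F η) + ∫ η in Ioo ε Real.pi, F η := by
      rw [hset]
      exact setIntegral_union (by
        apply Set.disjoint_left.mpr
        rintro η ⟨_, h2⟩ ⟨h3, _⟩
        linarith) measurableSet_Ioo hi2 hi1
    -- convert to interval integrals
    have hIoo_eq : ∀ (a b : ℝ) (g : ℝ → ℝ), a ≤ b →
        (∫ η in Ioo a b, g η) = ∫ η in a..b, g η := by
      intro a b g hab
      rw [intervalIntegral.integral_of_le hab, integral_Ioc_eq_integral_Ioo]
    have hrefl : (∫ η in Ioo (-Real.pi) (-ε), F η) = ∫ η in ε..Real.pi, F (-η) := by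
      rw [hIoo_eq _ _ F (by linarith)]
      exact (intervalIntegral.integral_comp_neg F (a := ε) (b := Real.pi)).symm
    have hii1 : IntervalIntegrable F volume ε Real.pi := by
      apply ContinuousOn.intervalIntegrable
      rw [uIcc_of_le (le_of_lt hεπ)]
      exact hFc hne1
    have hii2 : IntervalIntegrable (fun η => F (-η)) volume ε Real.pi := by
      apply ContinuousOn.intervalIntegrable
      rw [uIcc_of_le (le_of_lt hεπ)]
      apply (hFc hne2).comp continuous_neg.continuousOn
      intro η hη
      constructor <;> simp <;> linarith [hη.1, hη.2]
    have hIεsum : (∫ η in {η : ℝ | ε < |η| ∧ |η| < Real.pi}, F η)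
        = ∫ η in ε..Real.pi, (F η + F (-η)) := by
      rw [hsplit, hrefl, hIoo_eq _ _ F (le_of_lt hεπ),
        intervalIntegral.integral_add hii1 hii2]
      ring
    -- pointwise bound
    have hub : ∀ y : ℝ, u y ≤ M := fun y => le_trans (le_abs_self _) (hb y)
    have hptb : ∀ η ∈ Icc ε Real.pi,
        2*M - u (x₀ - η) - u (x₀ + η) ≤ F η + F (-η) := by
      intro η hη
      have hs : 0 < Real.sin (η/2)^2 := by
        have h1 : ε ≤ |η| := by rw [abs_of_pos (lt_of_lt_of_le hε0 hη.1)]; exact hη.1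
        have h2 : |η| ≤ Real.pi := by rw [abs_of_pos (lt_of_lt_of_le hε0 hη.1)]; exact hη.2
        exact sin_half_sq_pos hε0 h1 h2
      have hsle : Real.sin (η/2)^2 ≤ 1 := Real.sin_sq_le_one _
      have hFsum : F η + F (-η)
          = (2*M - u (x₀ - η) - u (x₀ + η)) / Real.sin (η/2)^2 := by
        have hneg : Real.sin ((-η)/2)^2 = Real.sin (η/2)^2 := by
          rw [show (-η)/2 = -(η/2) by ring, Real.sin_neg, neg_sq]
        simp only [hF, hneg, sub_neg_eq_add, hmax]
        field_simp
        ring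
      rw [hFsum, le_div_iff₀ hs]
      have ha : 0 ≤ 2*M - u (x₀ - η) - u (x₀ + η) := by
        have := hub (x₀ - η); have := hub (x₀ + η); linarith
      nlinarith
    have hiic : IntervalIntegrable (fun η => 2*M - u (x₀ - η) - u (x₀ + η)) volume ε Real.pi := by
      apply Continuous.intervalIntegrable
      fun_prop
    have hmono := intervalIntegral.integral_mono_on (le_of_lt hεπ) hiic
      (hii1.add hii2) hptb
    -- compute the lower integral
    have hcomp : (∫ η in ε..Real.pi, (2*M - u (x₀ - η) - u (x₀ + η)))
        = 2*M*(Real.pi - ε) - ((∫ η in x₀ - Real.pi..x₀ - ε, u η)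
            + ∫ η in x₀ + ε..x₀ + Real.pi, u η) := by
      have i1 : IntervalIntegrable (fun η => (2:ℝ)*M) volume ε Real.pi :=
        intervalIntegrable_const
      have i2 : IntervalIntegrable (fun η => u (x₀ - η)) volume ε Real.pi := by
        apply Continuous.intervalIntegrable; fun_prop
      have i3 : IntervalIntegrable (fun η => u (x₀ + η)) volume ε Real.pi := by
        apply Continuous.intervalIntegrable; fun_prop
      rw [show (fun η => 2*M - u (x₀ - η) - u (x₀ + η))
          = fun η => ((2*M : ℝ) - u (x₀ - η)) - u (x₀ + η) from rfl,
        intervalIntegral.integral_sub (i1.sub i2) i3,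
        intervalIntegral.integral_sub i1 i2,
        intervalIntegral.integral_const,
        intervalIntegral.integral_comp_sub_left u x₀,
        intervalIntegral.integral_comp_add_left u x₀]
      simp only [smul_eq_mul]
      ring
    have hui : ∀ a b : ℝ, IntervalIntegrable u volume a b :=
      fun a b => hu.intervalIntegrable a b
    have hchasles : (∫ η in x₀ - Real.pi..x₀ - ε, u η) + (∫ η in x₀ - ε..x₀ + ε, u η)
        + (∫ η in x₀ + ε..x₀ + Real.pi, u η) = ∫ η in x₀ - Real.pi..x₀ + Real.pi, u η := by
      rw [intervalIntegral.integral_add_adjacent_intervals (hui _ _) (hui _ _),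
        intervalIntegral.integral_add_adjacent_intervals (hui _ _) (hui _ _)]
    have hper0 : (∫ η in x₀ - Real.pi..x₀ + Real.pi, u η) = 0 := by
      have h := hperu.intervalIntegral_add_eq (x₀ - Real.pi) (-Real.pi)
      rw [show x₀ - Real.pi + 2*Real.pi = x₀ + Real.pi by ring,
        show -Real.pi + 2*Real.pi = Real.pi by ring] at h
      rw [h, hint]
    have hsmall : |∫ η in x₀ - ε..x₀ + ε, u η| ≤ M * (2*ε) := by
      have h := intervalIntegral.norm_integral_le_of_norm_le_const
        (C := M) (f := u) (a := x₀ - ε) (b := x₀ + ε) (fun x _ => by simpa using hb x)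
      rw [Real.norm_eq_abs] at h
      calc |∫ η in x₀ - ε..x₀ + ε, u η| ≤ M * |x₀ + ε - (x₀ - ε)| := h
        _ = M * (2*ε) := by rw [show x₀ + ε - (x₀ - ε) = 2*ε by ring,
              abs_of_pos (by linarith)]
      done
    -- put together
    have hIlb : 2*M*Real.pi - 4*M*ε ≤ ∫ η in {η : ℝ | ε < |η| ∧ |η| < Real.pi}, F η := by
      rw [hIεsum]
      have h1 : (∫ η in x₀ - Real.pi..x₀ - ε, u η) + (∫ η in x₀ + ε..x₀ + Real.pi, u η)
          ≤ M * (2*ε) := by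
        have habs := abs_le.mp hsmall
        linarith [hchasles, hper0, habs.1]
      calc 2*M*Real.pi - 4*M*ε ≤ 2*M*(Real.pi - ε)
            - ((∫ η in x₀ - Real.pi..x₀ - ε, u η) + ∫ η in x₀ + ε..x₀ + Real.pi, u η) := by
            linarith
        _ = ∫ η in ε..Real.pi, (2*M - u (x₀ - η) - u (x₀ + η)) := hcomp.symm
        _ ≤ _ := hmono
    show M / 2 - M * ε / Real.pi ≤ (1 / (4 * Real.pi)) * ∫ η in {η : ℝ | ε < |η| ∧ |η| < Real.pi},
        (u x₀ - u (x₀ - η)) / Real.sin (η / 2) ^ 2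
    rw [show (1 / (4 * Real.pi)) * (∫ η in {η : ℝ | ε < |η| ∧ |η| < Real.pi},
        (u x₀ - u (x₀ - η)) / Real.sin (η / 2) ^ 2)
        = (∫ η in {η : ℝ | ε < |η| ∧ |η| < Real.pi}, F η) / (4*Real.pi) by rw [hF]; ring,
      le_div_iff₀ (by positivity)]
    calc (M / 2 - M * ε / Real.pi) * (4 * Real.pi) = 2*M*Real.pi - 4*M*ε := by
          field_simp; ring
      _ ≤ _ := hIlb
  -- pass to the limit
  have h1 : Tendsto (fun ε => M/2 - M*ε/Real.pi) (𝓝[>] (0:ℝ)) (𝓝 (M/2)) := by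
    have hc : Continuous (fun ε : ℝ => M/2 - M*ε/Real.pi) := by fun_prop
    have h0 : Tendsto (fun ε : ℝ => M/2 - M*ε/Real.pi) (𝓝 0) (𝓝 (M/2)) := by
      have := hc.tendsto 0
      simpa using this
    exact h0.mono_left nhdsWithin_le_nhds
  have hev : ∀ᶠ ε in 𝓝[>] (0:ℝ), M/2 - M*ε/Real.pi ≤ pvIntegralT u x₀ ε := by
    filter_upwards [Ioo_mem_nhdsGT_of_mem (Set.left_mem_Ico.mpr hπ)] with ε hε
    exact key ε hε
  exact le_of_tendsto_of_tendsto h1 hpv hev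


section helpers

lemma HasPVLambdaT_neg {u : ℝ → ℝ} {x L : ℝ} (h : HasPVLambdaT u x L) :
    HasPVLambdaT (fun y => -u y) x (-L) := by
  have hε : ∀ ε : ℝ, pvIntegralT (fun y => -u y) x ε = -pvIntegralT u x ε := by
    intro ε
    unfold pvIntegralT
    rw [← mul_neg, ← integral_neg]
    congr 1
    apply integral_congr_ae
    filter_upwards with η
    show (-u x - -u (x - η)) / Real.sin (η / 2) ^ 2 = -((u x - u (x - η)) / Real.sin (η / 2) ^ 2)
    ring
  unfold HasPVLambdaT
  simp only [hε]
  exact h.neg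

lemma odd_integral_zero {u : ℝ → ℝ} (ho : ∀ x, u (-x) = -u x) :
    (∫ y in (-Real.pi)..Real.pi, u y) = 0 := by
  have h := intervalIntegral.integral_comp_neg u (a := -Real.pi) (b := Real.pi)
  rw [neg_neg] at h
  have h2 : (∫ x in (-Real.pi)..Real.pi, u (-x)) = -∫ x in (-Real.pi)..Real.pi, u x := by
    simp only [ho]
    exact intervalIntegral.integral_neg
  have h3 : (∫ x in (-Real.pi)..Real.pi, u x) = -∫ x in (-Real.pi)..Real.pi, u x := by
    rw [← h2, h]
  linarith

end helpers


set_option maxHeartbeats 1000000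

/-- exponential decay of the amplitude for odd, 2π-periodic solutions of
`∂_t f = (−1/(1+(∂_x f)²) + 1/(1+l²−f²))·Λf`, with the decay degenerating as `M₀ → l`. -/
theorem odd_periodic_amplitude_decay
    (l T : ℝ) (hl : 0 < l) (hT : 0 < T)
    (f Λf : ℝ → ℝ → ℝ)
    -- 2π-periodic and odd in x
    (hper : ∀ x : ℝ, ∀ t ∈ Icc (0:ℝ) T, f (x + 2 * Real.pi) t = f x t)
    (hodd : ∀ x : ℝ, ∀ t ∈ Icc (0:ℝ) T, f (-x) t = -f x t)
    -- f, ∂_x f, ∂_t f continuous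
    (hfc : ContinuousOn (fun p : ℝ × ℝ => f p.1 p.2) (univ ×ˢ Icc 0 T))
    (hfx : ∀ t ∈ Icc (0:ℝ) T, Differentiable ℝ fun x => f x t)
    (hfxc : ContinuousOn (fun p : ℝ × ℝ => deriv (fun x => f x p.2) p.1) (univ ×ˢ Icc 0 T))
    (htc : ContinuousOn
      (fun p : ℝ × ℝ => derivWithin (fun s => f p.1 s) (Icc 0 T) p.2) (univ ×ˢ Icc 0 T))
    -- sup_{x,t} |f| < l
    (hamp : ∃ c : ℝ, c < l ∧ ∀ x : ℝ, ∀ t ∈ Icc (0:ℝ) T, |f x t| ≤ c)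
    -- the principal value Λf exists everywhere, and Λf is continuous and bounded
    (hpv : ∀ x : ℝ, ∀ t ∈ Icc (0:ℝ) T, HasPVLambdaT (fun y => f y t) x (Λf x t))
    (hΛc : ContinuousOn (fun p : ℝ × ℝ => Λf p.1 p.2) (univ ×ˢ Icc 0 T))
    (hΛb : ∃ M : ℝ, ∀ x : ℝ, ∀ t ∈ Icc (0:ℝ) T, |Λf x t| ≤ M)
    -- the equation holds pointwise
    (heq : ∀ x : ℝ, ∀ t ∈ Icc (0:ℝ) T,
      HasDerivWithinAt (fun s => f x s)
        ((-(1 / (1 + (deriv (fun y => f y t) x) ^ 2))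
            + 1 / (1 + l ^ 2 - f x t ^ 2)) * Λf x t) (Icc 0 T) t) :
    ∀ t ∈ Icc (0:ℝ) T,
      (⨆ x : ℝ, |f x t|) ≤
        l * (⨆ x : ℝ, |f x 0|) /
          ((⨆ x : ℝ, |f x 0|) +
            (l - ⨆ x : ℝ, |f x 0|) * Real.exp (l ^ 2 / (1 + l ^ 2) / 2 * t)) := by
  obtain ⟨c, hcl, hc⟩ := hamp
  have hπ := Real.pi_pos
  have hc0 : (0:ℝ) ≤ c := le_trans (abs_nonneg _) (hc 0 0 ⟨le_rfl, hT.le⟩)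
  have hE : (0:ℝ) < 1 + l^2 := by positivity
  -- continuity in x
  have hcont_x : ∀ t ∈ Icc (0:ℝ) T, Continuous (fun x => f x t) := by
    intro t ht
    exact hfc.comp_continuous (f := fun x : ℝ => (x, t)) (by fun_prop)
      (fun x => ⟨mem_univ _, ht⟩)
  -- continuity in t
  have hcont_t : ∀ x : ℝ, ContinuousOn (fun s => f x s) (Icc 0 T) := by
    intro x
    exact hfc.comp (f := fun s : ℝ => (x, s))
      (by fun_prop : Continuous fun s : ℝ => (x, s)).continuousOn
      (fun s hs => ⟨mem_univ _, hs⟩)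
  -- periodicity
  have hperf : ∀ t ∈ Icc (0:ℝ) T, Function.Periodic (fun x => f x t) (2 * Real.pi) :=
    fun t ht x => hper x t ht
  -- time derivative
  set Q : ℝ → ℝ → ℝ := fun x s => derivWithin (fun s' => f x s') (Icc 0 T) s with hQdef
  have hQeq : ∀ x : ℝ, ∀ s ∈ Icc (0:ℝ) T, Q x s =
      (-(1 / (1 + (deriv (fun y => f y s) x) ^ 2)) + 1 / (1 + l ^ 2 - f x s ^ 2)) * Λf x s := by
    intro x s hs
    exact (heq x s hs).derivWithin ((uniqueDiffOn_Icc hT) s hs)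
  have hQd : ∀ x : ℝ, ∀ s ∈ Icc (0:ℝ) T,
      HasDerivWithinAt (fun s' => f x s') (Q x s) (Icc 0 T) s := by
    intro x s hs; rw [hQeq x s hs]; exact heq x s hs
  have hQda : ∀ x : ℝ, ∀ s ∈ Ioo (0:ℝ) T, HasDerivAt (fun s' => f x s') (Q x s) s := by
    intro x s hs
    exact (hQd x s (Ioo_subset_Icc_self hs)).hasDerivAt (Icc_mem_nhds hs.1 hs.2)
  set P : ℝ → ℝ → ℝ := fun x s => 2 * f x s * Q x s with hPdef
  have hPc : ContinuousOn (fun p : ℝ × ℝ => P p.1 p.2) (univ ×ˢ Icc 0 T) :=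
    (continuousOn_const.mul hfc).mul htc
  have hPda : ∀ x : ℝ, ∀ s ∈ Ioo (0:ℝ) T, HasDerivAt (fun s' => f x s' ^ 2) (P x s) s := by
    intro x s hs
    have h := (hQda x s hs).pow 2
    norm_num at h
    exact h
  -- N : the max of f² over a period
  set N : ℝ → ℝ := fun t => sSup ((fun x => f x t ^ 2) '' Icc (-Real.pi) Real.pi) with hNdef
  have hmaxex : ∀ t ∈ Icc (0:ℝ) T, ∃ x ∈ Icc (-Real.pi) Real.pi,
      (∀ y : ℝ, f y t ^ 2 ≤ f x t ^ 2) ∧ N t = f x t ^ 2 := by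
    intro t ht
    obtain ⟨x, hx, hmax⟩ := (isCompact_Icc (a := -Real.pi) (b := Real.pi)).exists_isMaxOn
      (f := fun x => f x t ^ 2)
      (Set.nonempty_Icc.mpr (by linarith)) ((hcont_x t ht).pow 2).continuousOn
    have hglob : ∀ y : ℝ, f y t ^ 2 ≤ f x t ^ 2 := by
      intro y
      obtain ⟨y', hy', hyy⟩ := (hperf t ht).exists_mem_Ico Real.two_pi_pos y (-Real.pi)
      have hy'2 : y' ∈ Icc (-Real.pi) Real.pi := by
        constructor
        · exact hy'.1
        · have := hy'.2; linarith [this]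
      have hyy' : f y t = f y' t := hyy
      rw [hyy']
      exact hmax hy'2
    refine ⟨x, hx, hglob, ?_⟩
    exact IsGreatest.csSup_eq ⟨⟨x, hx, rfl⟩, by rintro v ⟨y, hy, rfl⟩; exact hmax hy⟩
  have hNle : ∀ t ∈ Icc (0:ℝ) T, ∀ y : ℝ, f y t ^ 2 ≤ N t := by
    intro t ht y
    obtain ⟨x, _, hg, hNt⟩ := hmaxex t ht
    rw [hNt]; exact hg y
  have hNc2 : ∀ t ∈ Icc (0:ℝ) T, N t ≤ c^2 := by
    intro t ht
    obtain ⟨x, _, _, hNt⟩ := hmaxex t ht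
    rw [hNt]
    nlinarith [hc x t ht, abs_nonneg (f x t), sq_abs (f x t)]
  have hNnn : ∀ t ∈ Icc (0:ℝ) T, 0 ≤ N t := by
    intro t ht
    exact le_trans (sq_nonneg (f 0 t)) (hNle t ht 0)
  -- continuity of N
  have hNcont : ContinuousOn N (Icc 0 T) := by
    have hKc : IsCompact ((Icc (-Real.pi) Real.pi) ×ˢ (Icc (0:ℝ) T)) :=
      isCompact_Icc.prod isCompact_Icc
    have hgc : ContinuousOn (fun p : ℝ × ℝ => f p.1 p.2 ^ 2)
        (Icc (-Real.pi) Real.pi ×ˢ Icc 0 T) :=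
      (hfc.mono (fun p hp => ⟨mem_univ _, hp.2⟩)).pow 2
    have huc := hKc.uniformContinuousOn_of_continuous hgc
    rw [Metric.uniformContinuousOn_iff] at huc
    rw [Metric.continuousOn_iff]
    intro t ht ε hε
    obtain ⟨δ, hδ, hd⟩ := huc ε hε
    refine ⟨δ, hδ, fun t' ht' hdist => ?_⟩
    obtain ⟨x1, hx1, hg1, hN1⟩ := hmaxex t ht
    obtain ⟨x2, hx2, hg2, hN2⟩ := hmaxex t' ht'
    have hdp : ∀ x : ℝ, dist ((x, t') : ℝ × ℝ) ((x, t) : ℝ × ℝ) < δ := by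
      intro x
      rw [Prod.dist_eq]
      simp only [dist_self]
      rw [max_eq_right dist_nonneg]
      exact hdist
    have h1 := hd (x2, t') ⟨hx2, ht'⟩ (x2, t) ⟨hx2, ht⟩ (hdp x2)
    have h2 := hd (x1, t) ⟨hx1, ht⟩ (x1, t') ⟨hx1, ht'⟩ (by rw [dist_comm]; exact hdp x1)
    rw [Real.dist_eq] at h1 h2 ⊢
    have e1 : N t' < N t + ε := by
      rw [hN2]
      have := abs_lt.mp h1
      have hle : f x2 t ^ 2 ≤ N t := by rw [hN1]; exact hg1 x2
      simp only at this ⊢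
      linarith [this.2]
    have e2 : N t < N t' + ε := by
      rw [hN1]
      have := abs_lt.mp h2
      have hle : f x1 t' ^ 2 ≤ N t' := by rw [hN2]; exact hg2 x1
      simp only at this ⊢
      linarith [this.2]
    rw [abs_lt]
    constructor <;> linarith
  -- pointwise estimate at a global maximizer of f²
  have hpoint : ∀ t ∈ Icc (0:ℝ) T, ∀ x : ℝ, (∀ y : ℝ, f y t ^ 2 ≤ f x t ^ 2) →
      P x t ≤ -(f x t ^ 2 * (l^2 - f x t ^ 2)) / (1 + l^2) := by
    intro t ht x hmax
    have hac : |f x t| ≤ c := hc x t ht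
    have hal : f x t ^ 2 < l ^ 2 := by nlinarith [abs_nonneg (f x t), sq_abs (f x t)]
    have hDpos : 0 < 1 + l ^ 2 - f x t ^ 2 := by nlinarith
    rcases eq_or_ne (f x t) 0 with h0 | h0
    · have hP0 : P x t = 0 := by simp only [hPdef, h0]; ring
      rw [hP0, h0]
      simp
    · -- spatial derivative vanishes at the maximizer
      have hdx : deriv (fun y => f y t) x = 0 := by
        have hlm : IsLocalMax (fun y => f y t ^ 2) x :=
          Filter.Eventually.of_forall (fun y => hmax y)
        have hd2 := hlm.deriv_eq_zero
        have hd2' : deriv (fun y => f y t ^ 2) x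
            = 2 * f x t * deriv (fun y => f y t) x := by
          have h := ((hfx t ht x).hasDerivAt.pow 2).deriv
          norm_num at h
          exact h
        rw [hd2'] at hd2
        have h2a : (2 : ℝ) * f x t ≠ 0 := by
          simp [h0]
        exact (mul_eq_zero.mp hd2).resolve_left h2a
      have hQ : Q x t = (-1 + 1/(1 + l ^ 2 - f x t ^ 2)) * Λf x t := by
        rw [hQeq x t ht, hdx]
        norm_num
      -- |f y t| ≤ |f x t| everywhere
      have habs : ∀ y : ℝ, |f y t| ≤ |f x t| := by
        intro y
        have h1 := hmax y
        nlinarith [sq_abs (f y t), sq_abs (f x t), abs_nonneg (f y t), abs_nonneg (f x t)]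
      -- a * Λf x t ≥ a² / 2 where a = f x t
      have haΛ : f x t ^ 2 / 2 ≤ f x t * Λf x t := by
        rcases lt_or_gt_of_ne h0 with hneg | hpos
        · -- f x t < 0 : apply the PV lower bound to -f
          have hub : ∀ y : ℝ, |(fun y => -f y t) y| ≤ -f x t := by
            intro y
            have := habs y
            rw [abs_of_neg hneg] at this
            simpa using this
          have hΛ : (-f x t) / 2 ≤ -Λf x t := by
            apply pv_lower_bound (fun y => -f y t)
              ((hcont_x t ht).neg)
              (odd_integral_zero (fun y => by simp [hodd y t ht]))
              (fun y => by simp [hperf t ht y])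
              (-f x t) x (-Λf x t) hub rfl
            exact HasPVLambdaT_neg (hpv x t ht)
          nlinarith
        · -- f x t > 0 : apply the PV lower bound to f
          have hub : ∀ y : ℝ, |f y t| ≤ f x t := by
            intro y
            have := habs y
            rwa [abs_of_pos hpos] at this
          have hΛ : f x t / 2 ≤ Λf x t := by
            apply pv_lower_bound (fun y => f y t)
              (hcont_x t ht)
              (odd_integral_zero (fun y => hodd y t ht))
              (hperf t ht)
              (f x t) x (Λf x t) hub rfl (hpv x t ht)
          nlinarith
      -- conclude
      have hfac : (-1 + 1/(1 + l ^ 2 - f x t ^ 2))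
          = -((l ^ 2 - f x t ^ 2)/(1 + l ^ 2 - f x t ^ 2)) := by
        field_simp
        ring
      have hPval : P x t = -((2 * (l ^ 2 - f x t ^ 2)/(1 + l ^ 2 - f x t ^ 2))
          * (f x t * Λf x t)) := by
        simp only [hPdef]
        rw [hQ, hfac]
        ring
      rw [hPval]
      have hcoef : 0 ≤ 2 * (l ^ 2 - f x t ^ 2)/(1 + l ^ 2 - f x t ^ 2) :=
        div_nonneg (by nlinarith) hDpos.le
      have h2 := mul_le_mul_of_nonneg_left haΛ hcoef
      have h3 : -((2 * (l ^ 2 - f x t ^ 2)/(1 + l ^ 2 - f x t ^ 2)) * (f x t * Λf x t))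
          ≤ -((2 * (l ^ 2 - f x t ^ 2)/(1 + l ^ 2 - f x t ^ 2)) * (f x t ^ 2 / 2)) :=
        neg_le_neg h2
      refine h3.trans ?_
      have h4 : (2 * (l ^ 2 - f x t ^ 2)/(1 + l ^ 2 - f x t ^ 2)) * (f x t ^ 2 / 2)
          = (f x t ^ 2 * (l ^ 2 - f x t ^ 2))/(1 + l ^ 2 - f x t ^ 2) := by ring
      rw [h4, ← neg_div, div_le_div_iff₀ hDpos hE]
      have h5 : f x t ^ 2 * (l ^ 2 - f x t ^ 2) * (1 + l ^ 2 - f x t ^ 2)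
          ≤ f x t ^ 2 * (l ^ 2 - f x t ^ 2) * (1 + l ^ 2) := by
        apply mul_le_mul_of_nonneg_left (by nlinarith [sq_nonneg (f x t)])
        nlinarith [sq_nonneg (f x t)]
      nlinarith [h5]

  -- the Dini-type slope estimate for N
  set G2 : ℝ → ℝ := fun t => -(N t * (l ^ 2 - N t)) / (1 + l ^ 2) with hG2def
  have hslope : ∀ t ∈ Ico (0:ℝ) T, ∀ r, G2 t < r →
      ∃ᶠ z in 𝓝[>] t, slope N t z < r := by
    intro t ht r hr
    have htT : t < T := ht.2
    have ht0 : 0 ≤ t := ht.1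
    have htI : t ∈ Icc (0:ℝ) T := ⟨ht0, htT.le⟩
    set z : ℕ → ℝ := fun k => t + (T - t)/(k+1) with hzdef
    have hzt : ∀ k : ℕ, t < z k := by
      intro k
      have hk : (0:ℝ) < (k:ℝ) + 1 := by positivity
      have : 0 < (T - t)/((k:ℝ)+1) := div_pos (by linarith) hk
      simp only [hzdef]
      linarith
    have hzT : ∀ k : ℕ, z k ≤ T := by
      intro k
      have hk : (1:ℝ) ≤ (k:ℝ) + 1 := by
        have := Nat.cast_nonneg (α := ℝ) k
        linarith
      have h1 : (T - t)/((k:ℝ)+1) ≤ (T - t) := by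
        apply div_le_self (by linarith) hk
      simp only [hzdef]
      linarith
    have hzIcc : ∀ k, z k ∈ Icc (0:ℝ) T := fun k => ⟨by linarith [hzt k], hzT k⟩
    have hztend : Tendsto z atTop (𝓝[>] t) := by
      have h1 : Tendsto (fun k : ℕ => (T - t)/((k:ℝ)+1)) atTop (𝓝 0) := by
        have h2 := tendsto_one_div_add_atTop_nhds_zero_nat.const_mul (T - t)
        simp only [mul_zero] at h2
        simpa [div_eq_mul_inv] using h2
      have h2 : Tendsto z atTop (𝓝 t) := by
        have h3 := tendsto_const_nhds (x := t) (f := atTop (α := ℕ)) |>.add h1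
        simpa using h3
      exact tendsto_nhdsWithin_of_tendsto_nhds_of_eventually_within _ h2
        (Eventually.of_forall fun k => hzt k)
    -- maximizers at times z k
    choose xk hxk1 hxk2 hxk3 using fun k => hmaxex (z k) (hzIcc k)
    -- MVT
    have hslopek : ∀ k : ℕ, ∃ ξ ∈ Ioo t (z k), slope N t (z k) ≤ P (xk k) ξ := by
      intro k
      have hcont2 : ContinuousOn (fun s => f (xk k) s ^ 2) (Icc t (z k)) :=
        ((hcont_t (xk k)).mono (Icc_subset_Icc ht0 (hzT k))).pow 2
      have hderiv : ∀ s ∈ Ioo t (z k), HasDerivAt (fun s' => f (xk k) s' ^ 2) (P (xk k) s) s :=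
        fun s hs => hPda (xk k) s ⟨lt_of_le_of_lt ht0 hs.1, lt_of_lt_of_le hs.2 (hzT k)⟩
      obtain ⟨ξ, hξ, heqs⟩ := exists_hasDerivAt_eq_slope (fun s => f (xk k) s ^ 2)
        (fun s => P (xk k) s) (hzt k) hcont2 hderiv
      refine ⟨ξ, hξ, ?_⟩
      rw [slope_def_field, heqs]
      have hd : 0 < z k - t := sub_pos.2 (hzt k)
      rw [div_le_div_iff_of_pos_right hd]
      have h1 : N (z k) = f (xk k) (z k) ^ 2 := hxk3 k
      have h2 : f (xk k) t ^ 2 ≤ N t := hNle t htI (xk k)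
      linarith
    choose ξ hξmem hslope2 using hslopek
    -- compact subsequence
    obtain ⟨xs, hxsmem, φ, hφmono, hφtend⟩ := isCompact_Icc.tendsto_subseq (x := xk) hxk1
    have hztt : Tendsto (fun k => z (φ k)) atTop (𝓝[>] t) :=
      hztend.comp hφmono.tendsto_atTop
    have hztn : Tendsto (fun k => z (φ k)) atTop (𝓝 t) :=
      hztt.mono_right nhdsWithin_le_nhds
    have hξtend : Tendsto (fun k => ξ (φ k)) atTop (𝓝 t) := by
      apply tendsto_of_tendsto_of_tendsto_of_le_of_le tendsto_const_nhds hztn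
      · exact fun k => (hξmem (φ k)).1.le
      · exact fun k => (hξmem (φ k)).2.le
    have hξIcc : ∀ k, ξ (φ k) ∈ Icc (0:ℝ) T := fun k =>
      ⟨le_trans ht0 (hξmem (φ k)).1.le, le_trans (hξmem (φ k)).2.le (hzT (φ k))⟩
    -- P along the subsequence
    have hPt : Tendsto (fun k => P (xk (φ k)) (ξ (φ k))) atTop (𝓝 (P xs t)) := by
      have hcw : ContinuousWithinAt (fun p : ℝ × ℝ => P p.1 p.2) (univ ×ˢ Icc 0 T) (xs, t) :=
        hPc _ ⟨mem_univ _, htI⟩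
      have htuple : Tendsto (fun k => ((xk (φ k)), ξ (φ k))) atTop
          (𝓝[univ ×ˢ Icc 0 T] (xs, t)) := by
        apply tendsto_nhdsWithin_of_tendsto_nhds_of_eventually_within
        · exact hφtend.prodMk_nhds hξtend
        · exact Eventually.of_forall fun k => ⟨mem_univ _, hξIcc k⟩
      exact hcw.tendsto.comp htuple
    -- xs is a maximizer at time t
    have hxsmax : ∀ y : ℝ, f y t ^ 2 ≤ f xs t ^ 2 := by
      intro y
      have hky : ∀ k, f y (z (φ k)) ^ 2 ≤ f (xk (φ k)) (z (φ k)) ^ 2 :=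
        fun k => hxk2 (φ k) y
      have hL : Tendsto (fun k => f y (z (φ k)) ^ 2) atTop (𝓝 (f y t ^ 2)) := by
        have hcw : ContinuousWithinAt (fun s => f y s ^ 2) (Icc 0 T) t :=
          ((hcont_t y).pow 2) t htI
        apply hcw.tendsto.comp
        exact tendsto_nhdsWithin_of_tendsto_nhds_of_eventually_within _ hztn
          (Eventually.of_forall fun k => hzIcc (φ k))
      have hR : Tendsto (fun k => f (xk (φ k)) (z (φ k)) ^ 2) atTop (𝓝 (f xs t ^ 2)) := by
        have hcw : ContinuousWithinAt (fun p : ℝ × ℝ => f p.1 p.2 ^ 2)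
            (univ ×ˢ Icc 0 T) (xs, t) := (hfc.pow 2) _ ⟨mem_univ _, htI⟩
        have htuple2 : Tendsto (fun k => ((xk (φ k)), z (φ k))) atTop
            (𝓝[univ ×ˢ Icc 0 T] (xs, t)) := by
          apply tendsto_nhdsWithin_of_tendsto_nhds_of_eventually_within
          · exact hφtend.prodMk_nhds hztn
          · exact Eventually.of_forall fun k => ⟨mem_univ _, hzIcc (φ k)⟩
        exact hcw.tendsto.comp htuple2
      exact le_of_tendsto_of_tendsto hL hR (Eventually.of_forall hky)
    have hNts : N t = f xs t ^ 2 :=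
      IsGreatest.csSup_eq ⟨⟨xs, hxsmem, rfl⟩, by rintro v ⟨y, hy, rfl⟩; exact hxsmax y⟩
    have hPb : P xs t ≤ G2 t := by
      have h := hpoint t htI xs hxsmax
      rw [hG2def]
      simp only
      rw [hNts]
      exact h
    have hev : ∀ᶠ k in atTop, P (xk (φ k)) (ξ (φ k)) < r :=
      hPt.eventually (Filter.Tendsto.eventually_lt_const (lt_of_le_of_lt hPb hr) tendsto_id)
    have hev2 : ∀ᶠ k in atTop, slope N t (z (φ k)) < r :=
      hev.mono fun k hk => lt_of_le_of_lt (hslope2 (φ k)) hk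
    exact hztt.frequently hev2.frequently

  -- initial amplitude
  have hbdd0 : BddAbove (Set.range fun x => |f x 0|) :=
    ⟨c, by rintro v ⟨x, rfl⟩; exact hc x 0 ⟨le_rfl, hT.le⟩⟩
  set M₀ : ℝ := ⨆ x : ℝ, |f x 0| with hM₀def
  have hM₀c : M₀ ≤ c := ciSup_le fun x => hc x 0 ⟨le_rfl, hT.le⟩
  have hM₀0 : 0 ≤ M₀ := le_trans (abs_nonneg _) (le_ciSup hbdd0 0)
  have hM₀l : M₀ < l := lt_of_le_of_lt hM₀c hcl
  have hN0 : N 0 ≤ M₀ ^ 2 := by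
    obtain ⟨x, hx, _, hNt⟩ := hmaxex 0 ⟨le_rfl, hT.le⟩
    rw [hNt]
    have h1 : |f x 0| ≤ M₀ := le_ciSup hbdd0 x
    nlinarith [abs_nonneg (f x 0), sq_abs (f x 0)]
  intro t ht
  rcases eq_or_lt_of_le hM₀0 with hM0 | hM0
  · -- M₀ = 0 : the solution is identically 0
    have hNz : ∀ ε, 0 < ε → ε < l ^ 2 → N t ≤ ε := by
      intro ε hε1 hε2
      have hbound : ∀ s ∈ Ico (0:ℝ) T, N s = (fun _ : ℝ => ε) s → G2 s < (fun _ : ℝ => (0:ℝ)) s := by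
        intro s hs hNs
        simp only [hG2def]
        simp only at hNs
        rw [hNs]
        exact div_neg_of_neg_of_pos (by nlinarith) hE
      exact image_le_of_liminf_slope_right_lt_deriv_boundary (f := N) (f' := G2)
        (a := 0) (b := T) (B := fun _ => ε) (B' := fun _ => 0)
        hNcont hslope (by rw [← hM0] at hN0; norm_num at hN0; linarith)
        (fun x => hasDerivAt_const x ε) hbound ht
    have hNt0 : N t ≤ 0 := by
      by_contra h
      push_neg at h
      have hl2 : (0:ℝ) < l ^ 2 := by positivity
      have hmin : 0 < min (N t) (l ^ 2) := lt_min h hl2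
      have h1 := hNz (min (N t) (l ^ 2) / 2) (by linarith) (by
        have := min_le_right (N t) (l ^ 2); linarith)
      have h2 := min_le_left (N t) (l ^ 2)
      linarith
    have hR0 : l * M₀ / (M₀ + (l - M₀) * Real.exp (l ^ 2 / (1 + l ^ 2) / 2 * t)) = 0 := by
      rw [← hM0]
      simp
    rw [hR0]
    apply ciSup_le
    intro x
    have h1 : f x t ^ 2 ≤ 0 := le_trans (hNle t ht x) hNt0
    have h2 : f x t = 0 := by nlinarith [sq_nonneg (f x t)]
    simp [h2]
  · -- M₀ > 0 : barrier comparison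
    set c2 : ℝ := l ^ 2 / (1 + l ^ 2) with hc2def
    have hc2pos : 0 < c2 := by positivity
    set D : ℝ → ℝ := fun s => M₀ + (l - M₀) * Real.exp (c2 / 2 * s) with hDdef
    have hD0 : ∀ s, 0 < D s := fun s =>
      add_pos_of_nonneg_of_pos hM₀0 (mul_pos (by linarith) (Real.exp_pos _))
    set B : ℝ → ℝ := fun s => l * M₀ / D s with hBdef
    have hDd : ∀ s, HasDerivAt D ((l - M₀) * (c2 / 2 * Real.exp (c2 / 2 * s))) s := by
      intro s
      have h1 : HasDerivAt (fun s : ℝ => c2 / 2 * s) (c2 / 2) s := by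
        simpa using (hasDerivAt_id s).const_mul (c2 / 2)
      have h2 := h1.exp
      have h3 := h2.const_mul (l - M₀)
      have h4 := h3.const_add M₀
      exact h4.congr_deriv (by ring)
    have hBd : ∀ s, HasDerivAt B
        (-(l * M₀ * ((l - M₀) * (c2 / 2 * Real.exp (c2 / 2 * s)))) / (D s) ^ 2) s := by
      intro s
      have h := (hasDerivAt_const s (l * M₀)).div (hDd s) (hD0 s).ne'
      exact h.congr_deriv (by ring)
    have hB2d : ∀ s, HasDerivAt (fun s => B s ^ 2)
        (2 * B s * (-(l * M₀ * ((l - M₀) * (c2 / 2 * Real.exp (c2 / 2 * s)))) / (D s) ^ 2)) s := by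
      intro s
      have h := (hBd s).pow 2
      norm_num at h
      exact h
    have hB0 : N 0 ≤ (fun s => B s ^ 2) 0 := by
      have hB0v : B 0 = M₀ := by
        simp only [hBdef, hDdef, mul_zero, Real.exp_zero, mul_one]
        rw [show M₀ + (l - M₀) = l by ring]
        field_simp
      simp only [hB0v]
      exact hN0
    have hbound : ∀ s ∈ Ico (0:ℝ) T, N s = (fun s => B s ^ 2) s → G2 s <
        2 * B s * (-(l * M₀ * ((l - M₀) * (c2 / 2 * Real.exp (c2 / 2 * s)))) / (D s) ^ 2) := by
      intro s hs hNs
      simp only at hNs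
      have hb0 : 0 < B s := div_pos (mul_pos hl hM0) (hD0 s)
      have hbl : B s < l := by
        rw [hBdef]
        simp only
        rw [div_lt_iff₀ (hD0 s)]
        have hDM : M₀ < D s := by
          rw [hDdef]
          simp only
          nlinarith [Real.exp_pos (c2 / 2 * s)]
        nlinarith
      have h2bB' : 2 * B s * (-(l * M₀ * ((l - M₀) * (c2 / 2 * Real.exp (c2 / 2 * s)))) / (D s) ^ 2)
          = -(c2 * B s ^ 2 * (l - B s)) / l := by
        have hd : D s ≠ 0 := (hD0 s).ne'
        have hrel : (l - M₀) * Real.exp (c2 / 2 * s) = D s - M₀ := by rw [hDdef]; ring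
        have hBs : B s = l * M₀ / D s := by rw [hBdef]
        rw [show -(l * M₀ * ((l - M₀) * (c2 / 2 * Real.exp (c2 / 2 * s))))
            = -(l * M₀ * (c2 / 2) * (D s - M₀)) by rw [← hrel]; ring]
        rw [hBs]
        field_simp
      rw [h2bB', hG2def]
      simp only
      rw [hNs]
      have hgoal2 : -(c2 * B s ^ 2 * (l - B s)) / l = -(l * B s ^ 2 * (l - B s)) / (1 + l ^ 2) := by
        rw [hc2def]
        field_simp
      rw [hgoal2, div_lt_div_iff_of_pos_right hE]
      nlinarith [mul_pos (mul_pos hb0 hb0) (mul_pos hb0 (sub_pos.2 hbl))]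
    have hcmp := image_le_of_liminf_slope_right_lt_deriv_boundary (f := N) (f' := G2)
      (a := 0) (b := T) hNcont hslope hB0 hB2d hbound ht
    have hBt0 : 0 ≤ B t := le_of_lt (div_pos (mul_pos hl hM0) (hD0 t))
    show (⨆ x : ℝ, |f x t|) ≤ B t
    apply ciSup_le
    intro x
    have h1 : f x t ^ 2 ≤ B t ^ 2 := le_trans (hNle t ht x) hcmp
    nlinarith [abs_nonneg (f x t), sq_abs (f x t)]
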